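/- Let q : ℝ → ℂ be any function, let k ∈ ℂ, and let v₁, v₂ : ℝ → ℂ be differentiable functions satisfying the AKNS scattering system with reverse space-time Sine-Gordon symmetry reduction, i.e. for all x ∈ ℝ: v₁'(x) = -i k v₁(x) + q(x) v₂(x) and v₂'(x) = -q(-x) v₁(x) + i k v₂(x). Then the functions w₁(x) := v₂(-x) and w₂(x) := v₁(-x) solve the same system: for all x ∈ ℝ, w₁'(x) = -i k w₁(x) + q(x) w₂(x) and w₂'(x) = -q(-x) w₁(x) + i k w₂(x). -/
import Mathlib

/-- If `(v₁, v₂)` solves the AKNS scattering problem with the reverse space-time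
Sine-Gordon symmetry reduction `r(x) = -q(-x)`, then `(w₁, w₂) = (v₂(-·), v₁(-·))`
solves the same system. -/
theorem akns_sineGordon_symmetry (q : ℝ → ℂ) (k : ℂ) (v₁ v₂ : ℝ → ℂ)
    (hv₁ : Differentiable ℝ v₁) (hv₂ : Differentiable ℝ v₂)
    (h₁ : ∀ x : ℝ, deriv v₁ x = -Complex.I * k * v₁ x + q x * v₂ x)
    (h₂ : ∀ x : ℝ, deriv v₂ x = -q (-x) * v₁ x + Complex.I * k * v₂ x)
    (w₁ w₂ : ℝ → ℂ)
    (hw₁ : ∀ x : ℝ, w₁ x = v₂ (-x))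
    (hw₂ : ∀ x : ℝ, w₂ x = v₁ (-x)) :
    (∀ x : ℝ, deriv w₁ x = -Complex.I * k * w₁ x + q x * w₂ x) ∧
    (∀ x : ℝ, deriv w₂ x = -q (-x) * w₁ x + Complex.I * k * w₂ x) := by
  have hw₁' : w₁ = fun x => v₂ (-x) := funext hw₁
  have hw₂' : w₂ = fun x => v₁ (-x) := funext hw₂
  constructor <;> intro x
  · rw [hw₁', deriv_comp_neg, h₂]; simp only [hw₁, hw₂, neg_neg]
    ring
  · rw [hw₂', deriv_comp_neg, h₁]; simp only [hw₁, hw₂, neg_neg]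
    ring
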